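/- For the grid graph P_2 □ P_n (Cartesian product of paths) with n ≥ 2 and any k ≥ 1, fμᵏ(P_2 □ P_n) = 2. -/

import Mathlib

open SimpleGraph

variable {V : Type*}

/-- `X` is a `k`-fault-tolerant mutual-visibility set of `G`: for any two distinct
non-adjacent vertices `u v ∈ X` there are `k+1` internally disjoint shortest
`u,v`-paths whose only vertices in `X` are `u` and `v`. -/
def IsFtmvSet (G : SimpleGraph V) (k : ℕ) (X : Set V) : Prop :=
  ∀ u ∈ X, ∀ v ∈ X, u ≠ v → ¬ G.Adj u v →
    ∃ P : Fin (k + 1) → G.Path u v,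
      (∀ i, (P i).1.length = G.dist u v) ∧
      (∀ i, ∀ w ∈ (P i).1.support, w ∈ X → w = u ∨ w = v) ∧
      (∀ i j, i ≠ j → ∀ w, w ∈ (P i).1.support → w ∈ (P j).1.support → w = u ∨ w = v)

/-- The `k`-fault-tolerant mutual-visibility number: maximum cardinality of a `k`-ftmv set. -/
noncomputable def ftmvNum (G : SimpleGraph V) (k : ℕ) : ℕ :=
  sSup {n | ∃ X : Set V, IsFtmvSet G k X ∧ X.ncard = n}

/-- The clique number of `G`. -/
noncomputable def cliqueNum' (G : SimpleGraph V) : ℕ :=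
  sSup {n | ∃ s : Finset V, G.IsNClique n s}


-- lower bound on walk length in grid
lemma grid_walk_len {n : ℕ} {u v : Fin 2 × Fin n}
    (W : (pathGraph 2 □ pathGraph n).Walk u v) :
    Nat.dist u.1.1 v.1.1 + Nat.dist u.2.1 v.2.1 ≤ W.length := by
  induction W with
  | nil => simp [Nat.dist]
  | cons h W ih =>
    rename_i a b c
    rw [SimpleGraph.Walk.length_cons]
    rcases boxProd_adj.mp h with ⟨h1, h2⟩ | ⟨h1, h2⟩ <;>
      rw [pathGraph_adj] at h1 <;>
      · simp only [Nat.dist] at *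
        omega

-- walk in pathGraph of the right length
lemma pathGraph_walk_exists {m : ℕ} (a b : Fin m) :
    ∃ W : (pathGraph m).Walk a b, W.length = Nat.dist a.1 b.1 := by
  rcases le_total a.1 b.1 with hab | hab
  · obtain ⟨d, hd⟩ := Nat.le.dest hab
    clear hab
    induction d generalizing a with
    | zero =>
      have : a = b := Fin.ext (by omega)
      subst this
      exact ⟨SimpleGraph.Walk.nil, by simp [Nat.dist]⟩
    | succ d ih =>
      have ha1 : a.1 + 1 < m := by have := b.isLt; omega
      set a' : Fin m := ⟨a.1 + 1, ha1⟩ with ha'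
      have hadj : (pathGraph m).Adj a a' := pathGraph_adj.mpr (Or.inl rfl)
      obtain ⟨W, hW⟩ := ih a' (by simp [ha']; omega)
      refine ⟨SimpleGraph.Walk.cons hadj W, ?_⟩
      rw [SimpleGraph.Walk.length_cons, hW]
      simp only [Nat.dist, ha']
      have := b.isLt
      omega
  · obtain ⟨d, hd⟩ := Nat.le.dest hab
    clear hab
    -- reverse direction: build walk from b to a and reverse
    have key : ∀ d (a b : Fin m), b.1 + d = a.1 → ∃ W : (pathGraph m).Walk b a, W.length = d := by
      intro d
      induction d with
      | zero =>
        intro a b h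
        have : b = a := Fin.ext (by omega)
        subst this
        exact ⟨SimpleGraph.Walk.nil, rfl⟩
      | succ d ih =>
        intro a b h
        have hb1 : b.1 + 1 < m := by have := a.isLt; omega
        set b' : Fin m := ⟨b.1 + 1, hb1⟩ with hb'
        have hadj : (pathGraph m).Adj b b' := pathGraph_adj.mpr (Or.inl rfl)
        obtain ⟨W, hW⟩ := ih a b' (by simp [hb']; omega)
        exact ⟨SimpleGraph.Walk.cons hadj W, by simp [hW]⟩
    obtain ⟨W, hW⟩ := key d a b hd
    refine ⟨W.reverse, ?_⟩
    rw [SimpleGraph.Walk.length_reverse, hW]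
    simp only [Nat.dist]
    omega

lemma grid_connected {n : ℕ} (hn : 2 ≤ n) : (pathGraph 2 □ pathGraph n).Connected := by
  obtain ⟨m, rfl⟩ : ∃ m, n = m + 1 := ⟨n - 1, by omega⟩
  exact (pathGraph_connected 1).boxProd (pathGraph_connected m)

lemma grid_dist {n : ℕ} (hn : 2 ≤ n) (u v : Fin 2 × Fin n) :
    (pathGraph 2 □ pathGraph n).dist u v = Nat.dist u.1.1 v.1.1 + Nat.dist u.2.1 v.2.1 := by
  refine le_antisymm ?_ ?_
  · obtain ⟨u1, u2⟩ := u
    obtain ⟨v1, v2⟩ := v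
    obtain ⟨W1, hW1⟩ := pathGraph_walk_exists u1 v1
    obtain ⟨W2, hW2⟩ := pathGraph_walk_exists u2 v2
    have hd := SimpleGraph.dist_le ((W1.boxProdLeft (pathGraph n) u2).append
      (W2.boxProdRight (pathGraph 2) v1))
    rwa [SimpleGraph.Walk.length_append,
      show (W1.boxProdLeft (pathGraph n) u2).length = W1.length from
        SimpleGraph.Walk.length_map ..,
      show (W2.boxProdRight (pathGraph 2) v1).length = W2.length from
        SimpleGraph.Walk.length_map .., hW1, hW2] at hd
  · obtain ⟨W, hW⟩ := ((grid_connected hn).exists_walk_length_eq_dist u v)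
    rw [← hW]
    exact grid_walk_len W

-- second vertex of a shortest walk
lemma second_vertex {V : Type*} {G : SimpleGraph V} {u v : V}
    (W : G.Walk u v) (hlen : W.length = G.dist u v) (hne : u ≠ v) :
    ∃ w, G.Adj u w ∧ w ∈ W.support ∧ G.dist w v + 1 = G.dist u v := by
  cases W with
  | nil => exact absurd rfl hne
  | cons h W' =>
    rename_i w
    refine ⟨w, h, by simp, ?_⟩
    have h1 : G.dist w v ≤ W'.length := SimpleGraph.dist_le W'
    have h2 : G.dist u v ≤ G.dist w v + 1 := by
      obtain ⟨W'', hW''⟩ := SimpleGraph.Reachable.exists_walk_length_eq_dist ⟨W'⟩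
      have := SimpleGraph.dist_le (SimpleGraph.Walk.cons h W'')
      simp only [SimpleGraph.Walk.length_cons, hW''] at this
      omega
    simp only [SimpleGraph.Walk.length_cons] at hlen
    omega

section core
variable {V : Type*} {G : SimpleGraph V} {k : ℕ} {X : Set V}

lemma coreC1 (hX : IsFtmvSet G k X) (hk : 1 ≤ k) {u v w0 : V}
    (hu : u ∈ X) (hv : v ∈ X) (hne : u ≠ v) (hnadj : ¬ G.Adj u v)
    (hD : ∀ w, G.Adj u w → G.dist w v + 1 = G.dist u v → w = w0) : False := by
  obtain ⟨P, hlen, _, hdisj⟩ := hX u hu v hv hne hnadj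
  have hi : (⟨0, by omega⟩ : Fin (k+1)) ≠ ⟨1, by omega⟩ := by
    simp [Fin.ext_iff]
  obtain ⟨s0, hadj0, hmem0, hd0⟩ := second_vertex (P ⟨0, by omega⟩).1 (hlen _) hne
  obtain ⟨s1, hadj1, hmem1, hd1⟩ := second_vertex (P ⟨1, by omega⟩).1 (hlen _) hne
  have e0 := hD s0 hadj0 hd0
  have e1 := hD s1 hadj1 hd1
  rw [e0] at hmem0 hadj0
  rw [e1] at hmem1
  rcases hdisj _ _ hi w0 hmem0 hmem1 with rfl | rfl
  · exact G.irrefl hadj0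
  · exact hnadj hadj0

lemma coreC2 (hX : IsFtmvSet G k X) (hk : 1 ≤ k) {u v w0 w1 : V}
    (hu : u ∈ X) (hv : v ∈ X) (hne : u ≠ v) (hnadj : ¬ G.Adj u v)
    (hw0X : w0 ∈ X) (hw0v : w0 ≠ v)
    (hD : ∀ w, G.Adj u w → G.dist w v + 1 = G.dist u v → w = w0 ∨ w = w1) : False := by
  obtain ⟨P, hlen, hav, hdisj⟩ := hX u hu v hv hne hnadj
  have hi : (⟨0, by omega⟩ : Fin (k+1)) ≠ ⟨1, by omega⟩ := by
    simp [Fin.ext_iff]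
  obtain ⟨s0, hadj0, hmem0, hd0⟩ := second_vertex (P ⟨0, by omega⟩).1 (hlen _) hne
  obtain ⟨s1, hadj1, hmem1, hd1⟩ := second_vertex (P ⟨1, by omega⟩).1 (hlen _) hne
  have notw0 : ∀ (i : Fin (k+1)) s, G.Adj u s → s ∈ (P i).1.support → s ≠ w0 := by
    intro i s hadj hmem hsw
    subst hsw
    rcases hav i s hmem hw0X with rfl | rfl
    · exact G.irrefl hadj
    · exact hw0v rfl
  have e0 : s0 = w1 := (hD s0 hadj0 hd0).resolve_left (notw0 _ _ hadj0 hmem0)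
  have e1 : s1 = w1 := (hD s1 hadj1 hd1).resolve_left (notw0 _ _ hadj1 hmem1)
  rw [e0] at hmem0 hadj0
  rw [e1] at hmem1
  rcases hdisj _ _ hi w1 hmem0 hmem1 with rfl | rfl
  · exact G.irrefl hadj0
  · exact hnadj hadj0

end core

lemma gridA {n k : ℕ} (hn : 2 ≤ n) {X : Set (Fin 2 × Fin n)}
    (hX : IsFtmvSet (pathGraph 2 □ pathGraph n) k X) (hk : 1 ≤ k)
    {u v : Fin 2 × Fin n} (hu : u ∈ X) (hv : v ∈ X)
    (h1 : u.1 = v.1) (h2 : u.2.1 + 2 ≤ v.2.1) : False := by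
  have hvlt := v.2.isLt
  have hne : u ≠ v := fun h => by rw [h] at h2; omega
  have h1' : u.1.1 = v.1.1 := congrArg Fin.val h1
  have hnadj : ¬ (pathGraph 2 □ pathGraph n).Adj u v := by
    rw [boxProd_adj]
    rintro (⟨ha, hb⟩ | ⟨ha, hb⟩)
    · rw [h1] at ha; exact (pathGraph 2).irrefl ha
    · rw [pathGraph_adj] at ha; omega
  have hlt : u.2.1 + 1 < n := by omega
  refine coreC1 hX hk (w0 := (u.1, ⟨u.2.1 + 1, hlt⟩)) hu hv hne hnadj ?_
  intro w hadj hdist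
  rw [grid_dist hn, grid_dist hn] at hdist
  rcases boxProd_adj.mp hadj with ⟨ha, hb⟩ | ⟨ha, hb⟩
  · rw [pathGraph_adj] at ha
    have hb' : u.2.1 = w.2.1 := congrArg Fin.val hb
    exfalso
    simp only [Nat.dist] at hdist
    omega
  · rw [pathGraph_adj] at ha
    have hb' : u.1.1 = w.1.1 := congrArg Fin.val hb
    simp only [Nat.dist] at hdist
    exact Prod.ext_iff.mpr ⟨Fin.ext (show w.1.1 = u.1.1 from hb'.symm), Fin.ext (by show w.2.1 = u.2.1 + 1; omega)⟩

lemma gridD {n k : ℕ} (hn : 2 ≤ n) {X : Set (Fin 2 × Fin n)}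
    (hX : IsFtmvSet (pathGraph 2 □ pathGraph n) k X) (hk : 1 ≤ k)
    {u v x : Fin 2 × Fin n} (hu : u ∈ X) (hv : v ∈ X) (hx : x ∈ X)
    (hrow : u.1 ≠ v.1) (hx1 : x.1 = u.1)
    (hdir : (u.2.1 < v.2.1 ∧ x.2.1 = u.2.1 + 1) ∨ (v.2.1 < u.2.1 ∧ x.2.1 + 1 = u.2.1)) :
    False := by
  have hu1 := u.1.isLt
  have hv1 := v.1.isLt
  have hw2lt := v.2.isLt
  have hrow' : u.1.1 ≠ v.1.1 := fun h => hrow (Fin.ext h)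
  have hne : u ≠ v := fun h => hrow (congrArg Prod.fst h)
  have hnadj : ¬ (pathGraph 2 □ pathGraph n).Adj u v := by
    rw [boxProd_adj]
    rintro (⟨ha, hb⟩ | ⟨ha, hb⟩)
    · have := congrArg Fin.val hb; omega
    · exact hrow hb
  have hxv : x ≠ v := fun h => hrow (hx1 ▸ congrArg Prod.fst h)
  refine coreC2 hX hk (w0 := x) (w1 := (v.1, u.2)) hu hv hne hnadj hx hxv ?_
  intro w hadj hdist
  rw [grid_dist hn, grid_dist hn] at hdist
  have hx1' : x.1.1 = u.1.1 := congrArg Fin.val hx1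
  rcases boxProd_adj.mp hadj with ⟨ha, hb⟩ | ⟨ha, hb⟩
  · rw [pathGraph_adj] at ha
    have hb' : u.2.1 = w.2.1 := congrArg Fin.val hb
    have hw1 := w.1.isLt
    exact Or.inr (Prod.ext_iff.mpr ⟨Fin.ext (by show w.1.1 = v.1.1; omega), Fin.ext hb'.symm⟩)
  · rw [pathGraph_adj] at ha
    have hb' : u.1.1 = w.1.1 := congrArg Fin.val hb
    simp only [Nat.dist] at hdist
    exact Or.inl (Prod.ext_iff.mpr ⟨Fin.ext (by omega), Fin.ext (by omega)⟩).symm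

lemma main3 {n k : ℕ} (hn : 2 ≤ n) {X : Set (Fin 2 × Fin n)}
    (hX : IsFtmvSet (pathGraph 2 □ pathGraph n) k X) (hk : 1 ≤ k)
    {p q t : Fin 2 × Fin n} (hp : p ∈ X) (hq : q ∈ X) (ht : t ∈ X)
    (hpq1 : p.1 = q.1) (hpq2 : p.2.1 < q.2.1)
    (htp : t ≠ p) (htq : t ≠ q) : False := by
  rcases lt_or_ge (p.2.1 + 1) q.2.1 with h | h
  · exact gridA hn hX hk hp hq hpq1 (by omega)
  have hq2 : q.2.1 = p.2.1 + 1 := by omega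
  by_cases ht1 : t.1 = p.1
  · -- all in same row
    have htp2 : t.2.1 ≠ p.2.1 := fun h' =>
      htp (Prod.ext_iff.mpr ⟨ht1, Fin.ext h'⟩)
    have htq2 : t.2.1 ≠ q.2.1 := fun h' =>
      htq (Prod.ext_iff.mpr ⟨ht1.trans hpq1, Fin.ext h'⟩)
    rcases lt_or_ge t.2.1 p.2.1 with h' | h'
    · exact gridA hn hX hk ht hq (ht1.trans hpq1) (by omega)
    · exact gridA hn hX hk hp ht ht1.symm (by omega)
  · rcases lt_or_ge t.2.1 q.2.1 with h' | h'
    · refine gridD hn hX hk hq ht hp ?_ hpq1 (Or.inr ⟨h', by omega⟩)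
      rw [← hpq1]; exact fun hh => ht1 hh.symm
    · refine gridD hn hX hk hp ht hq ?_ hpq1.symm (Or.inl ⟨by omega, by omega⟩)
      exact fun hh => ht1 hh.symm

lemma grid_ncard_le {n k : ℕ} (hn : 2 ≤ n) (hk : 1 ≤ k) {X : Set (Fin 2 × Fin n)}
    (hX : IsFtmvSet (pathGraph 2 □ pathGraph n) k X) : X.ncard ≤ 2 := by
  by_contra h
  push_neg at h
  obtain ⟨a, ha, b, hb, c, hc, hab, hac, hbc⟩ := (Set.two_lt_ncard (Set.toFinite X)).mp h
  have key : ∀ p q t : Fin 2 × Fin n, p ∈ X → q ∈ X → t ∈ X →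
      p ≠ q → t ≠ p → t ≠ q → p.1 = q.1 → False := by
    intro p q t hp hq ht hpq htp htq h1
    have h2 : p.2 ≠ q.2 := fun h' => hpq (Prod.ext_iff.mpr ⟨h1, h'⟩)
    have h2' : p.2.1 ≠ q.2.1 := fun h' => h2 (Fin.ext h')
    rcases lt_or_ge p.2.1 q.2.1 with h' | h'
    · exact main3 hn hX hk hp hq ht h1 h' htp htq
    · exact main3 hn hX hk hq hp ht h1.symm (by omega) htq htp
  have ha1 := a.1.isLt
  have hb1 := b.1.isLt
  have hc1 := c.1.isLt
  rcases show a.1 = b.1 ∨ a.1 = c.1 ∨ b.1 = c.1 by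
      by_contra hcon
      push_neg at hcon
      obtain ⟨e1, e2, e3⟩ := hcon
      have f1 : a.1.1 ≠ b.1.1 := fun h' => e1 (Fin.ext h')
      have f2 : a.1.1 ≠ c.1.1 := fun h' => e2 (Fin.ext h')
      have f3 : b.1.1 ≠ c.1.1 := fun h' => e3 (Fin.ext h')
      omega
    with h1 | h1 | h1
  · exact key a b c ha hb hc hab (Ne.symm hac) (Ne.symm hbc) h1
  · exact key a c b ha hc hb hac (Ne.symm hab) hbc h1
  · exact key b c a hb hc ha hbc hab hac h1

theorem stmt13 (n : ℕ) (hn : 2 ≤ n) (k : ℕ) (hk : 1 ≤ k) :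
    ftmvNum (pathGraph 2 □ pathGraph n) k = 2 := by
  rw [ftmvNum]
  set G := pathGraph 2 □ pathGraph n with hG
  have hn0 : 0 < n := by omega
  set A : Fin 2 × Fin n := (⟨0, by omega⟩, ⟨0, hn0⟩) with hA
  set B : Fin 2 × Fin n := (⟨1, by omega⟩, ⟨0, hn0⟩) with hB
  have hAB : A ≠ B := by simp [hA, hB, Prod.ext_iff, Fin.ext_iff]
  have hadj : G.Adj A B := boxProd_adj.mpr (Or.inl ⟨pathGraph_adj.mpr (Or.inl rfl), rfl⟩)
  have hset : IsFtmvSet G k {A, B} := by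
    intro u hu v hv hne hnadj
    exfalso
    rcases hu with rfl | hu <;> rcases hv with rfl | hv
    · exact hne rfl
    · rw [Set.mem_singleton_iff] at hv; subst hv; exact hnadj hadj
    · rw [Set.mem_singleton_iff] at hu; subst hu; exact hnadj hadj.symm
    · rw [Set.mem_singleton_iff] at hu hv; subst hu; subst hv; exact hne rfl
  have h2S : 2 ∈ {m | ∃ X : Set (Fin 2 × Fin n), IsFtmvSet G k X ∧ X.ncard = m} :=
    ⟨{A, B}, hset, Set.ncard_pair hAB⟩
  have hub : ∀ m ∈ {m | ∃ X : Set (Fin 2 × Fin n), IsFtmvSet G k X ∧ X.ncard = m}, m ≤ 2 := by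
    rintro m ⟨X, hX, rfl⟩
    exact grid_ncard_le hn hk hX
  exact le_antisymm (csSup_le ⟨2, h2S⟩ hub) (le_csSup ⟨2, hub⟩ h2S)
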